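/- Let C be an intersection graph that is a cycle of segment pairs as in the variable gadget: an even cycle v_1, v_2, ..., v_{2p} of segments where consecutive segments cross, each crossing point is at distance 1 from an endpoint of each involved segment, and each segment has length 8 (so a segment contributes either its full length 8 or two stubs of total length 2). Then the gadget has exactly two maximum-ink SPEDs: one where all odd-indexed segments are drawn fully and all even-indexed segments are drawn as length-1 stub pairs, and the symmetric one; each achieves ink 10p. -/
import Mathlib

section aux
variable {p : ℕ}

/-- Shift invariance of the sum over `ZMod (2*p)`. -/
lemma aux_shift [NeZero (2 * p)] (t : ZMod (2 * p) → ℝ) :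
    ∑ i, t (i + 1) = ∑ i, t i :=
  Fintype.sum_equiv (Equiv.addRight (1 : ZMod (2 * p))) _ _ (fun _ => rfl)

lemma aux_ink [NeZero (2 * p)] (t : ZMod (2 * p) → ℝ) :
    ∑ i, 2 * t i = ∑ i, (t i + t (i + 1)) := by
  rw [Finset.sum_add_distrib, aux_shift t]
  rw [← Finset.sum_add_distrib]
  congr 1; funext i; ring

/-- From evenness of `i.val`, the successor has odd val. -/
lemma aux_succ_odd (hp : 1 ≤ p) [NeZero (2 * p)] (i : ZMod (2 * p))
    (hi : i.val % 2 = 0) : (i + 1).val % 2 = 1 := by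
  haveI : Fact (1 < 2 * p) := ⟨by omega⟩
  have hv : i.val < 2 * p := ZMod.val_lt i
  have h1 : (i + 1).val = (i.val + 1) % (2 * p) := by
    rw [ZMod.val_add, ZMod.val_one]
  have hlt : i.val + 1 < 2 * p := by omega
  rw [h1, Nat.mod_eq_of_lt hlt]; omega

/-- From oddness of `i.val`, the successor has even val. -/
lemma aux_succ_even (hp : 1 ≤ p) [NeZero (2 * p)] (i : ZMod (2 * p))
    (hi : i.val % 2 = 1) : (i + 1).val % 2 = 0 := by
  haveI : Fact (1 < 2 * p) := ⟨by omega⟩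
  have hv : i.val < 2 * p := ZMod.val_lt i
  have h1 : (i + 1).val = (i.val + 1) % (2 * p) := by
    rw [ZMod.val_add, ZMod.val_one]
  rcases eq_or_lt_of_le (show i.val + 1 ≤ 2 * p by omega) with he | hlt
  · rw [h1, he, Nat.mod_self]
  · rw [h1, Nat.mod_eq_of_lt hlt]; omega

/-- A configuration constant `a` on even positions and `b` on odd positions has
all consecutive pair-sums equal to `a + b`. -/
lemma aux_pair (hp : 1 ≤ p) [NeZero (2 * p)] (t : ZMod (2 * p) → ℝ) (a b : ℝ)
    (h : ∀ i : ZMod (2 * p), i.val % 2 = 0 → t i = a ∧ t (i + 1) = b) :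
    ∀ i, t i + t (i + 1) = a + b := by
  intro i
  rcases Nat.even_or_odd i.val with he | ho
  · obtain ⟨h1, h2⟩ := h i (Nat.even_iff.mp he)
    rw [h1, h2]
  · have ho' : i.val % 2 = 1 := Nat.odd_iff.mp ho
    have hv : i.val < 2 * p := ZMod.val_lt i
    -- t i = b: i = j + 1 for j = ↑(i.val - 1) with even val
    have hcast : ((i.val : ℕ) : ZMod (2 * p)) = i := ZMod.natCast_rightInverse i
    have hj : (((i.val - 1 : ℕ)) : ZMod (2 * p)).val = i.val - 1 :=
      ZMod.val_natCast_of_lt (by omega)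
    have hji : (((i.val - 1 : ℕ)) : ZMod (2 * p)) + 1 = i := by
      have h2 : (((i.val - 1 : ℕ)) : ZMod (2 * p)) + 1 = (((i.val - 1) + 1 : ℕ) : ZMod (2 * p)) := by
        push_cast; ring
      rw [h2, show (i.val - 1) + 1 = i.val from by omega, hcast]
    have hjeven : (((i.val - 1 : ℕ)) : ZMod (2 * p)).val % 2 = 0 := by
      rw [hj]; omega
    have hti : t i = b := by
      have := (h _ hjeven).2
      rwa [hji] at this
    have hsi : (i + 1).val % 2 = 0 := aux_succ_even hp i ho'
    have hti1 : t (i + 1) = a := (h _ hsi).1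
    rw [hti, hti1]; ring

lemma aux_ink_config (hp : 1 ≤ p) [NeZero (2 * p)] (t : ZMod (2 * p) → ℝ) (a b : ℝ)
    (hab : a + b = 5)
    (h : ∀ i : ZMod (2 * p), i.val % 2 = 0 → t i = a ∧ t (i + 1) = b) :
    ∑ i, 2 * t i = 10 * p := by
  rw [aux_ink t]
  have := aux_pair hp t a b h
  calc ∑ i, (t i + t (i + 1)) = ∑ _i : ZMod (2 * p), (5 : ℝ) := by
        apply Finset.sum_congr rfl; intro i _; rw [this i, hab]
    _ = 10 * p := by
        rw [Finset.sum_const, Finset.card_univ, ZMod.card]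
        ring

end aux

/-- the variable gadget. An even cycle of 2p segments, each of length 8, in
which consecutive segments cross and each crossing point is at distance 1 from an endpoint
of each involved segment.  A SPED assigns to segment i a per-side stub length `t i` with
`0 < t i ≤ 4` (value 4 = the whole segment of length 8 is drawn); a drawn part covers a
crossing point (at distance 1 from an endpoint) iff the stub length exceeds 1, so validity
requires that for consecutive segments not both stub lengths exceed 1.  The ink is
`∑ 2 * t i`. The gadget has exactly two maximum-ink SPEDs, namely the two alternating
configurations (all odd-indexed segments full of length 8, all even-indexed ones drawn as
two length-1 stubs, or vice versa), each of ink 10p. -/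
theorem stmt_2 (p : ℕ) (hp : 1 ≤ p) [NeZero (2 * p)]
    (valid : (ZMod (2 * p) → ℝ) → Prop)
    (hvalid : ∀ t, valid t ↔
      (∀ i, 0 < t i ∧ t i ≤ 4) ∧ ∀ i, ¬ (1 < t i ∧ 1 < t (i + 1)))
    (ink : (ZMod (2 * p) → ℝ) → ℝ)
    (hink : ∀ t, ink t = ∑ i, 2 * t i) :
    IsGreatest {I | ∃ t, valid t ∧ I = ink t} (10 * p) ∧
    (∀ t, valid t →
      (ink t = 10 * p ↔
        ((∀ i : ZMod (2 * p), i.val % 2 = 0 → t i = 4 ∧ t (i + 1) = 1) ∨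
         (∀ i : ZMod (2 * p), i.val % 2 = 0 → t i = 1 ∧ t (i + 1) = 4)))) := by
  -- pair bound for any valid t
  have pair_le : ∀ t : ZMod (2 * p) → ℝ, valid t → ∀ i, t i + t (i + 1) ≤ 5 := by
    intro t ht i
    obtain ⟨hb, hc⟩ := (hvalid t).mp ht
    rcases le_or_gt (t i) 1 with h | h
    · linarith [(hb (i + 1)).2]
    · have : ¬ (1 < t (i + 1)) := fun hh => hc i ⟨h, hh⟩
      linarith [(hb i).2]
  have ink_le : ∀ t : ZMod (2 * p) → ℝ, valid t → ink t ≤ 10 * p := by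
    intro t ht
    rw [hink, aux_ink]
    calc ∑ i, (t i + t (i + 1)) ≤ ∑ _i : ZMod (2 * p), (5 : ℝ) :=
          Finset.sum_le_sum fun i _ => pair_le t ht i
      _ = 10 * p := by
          rw [Finset.sum_const, Finset.card_univ, ZMod.card]; push_cast; ring
  -- the witness configuration
  set t₀ : ZMod (2 * p) → ℝ := fun i => if i.val % 2 = 0 then 4 else 1 with ht₀
  have hconfig₀ : ∀ i : ZMod (2 * p), i.val % 2 = 0 → t₀ i = 4 ∧ t₀ (i + 1) = 1 := by
    intro i hi
    have hodd := aux_succ_odd hp i hi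
    constructor
    · simp [ht₀, hi]
    · simp [ht₀, hodd]
  have hvalid₀ : valid t₀ := by
    rw [hvalid]
    constructor
    · intro i; simp only [ht₀]; split_ifs <;> norm_num
    · rintro i ⟨ha, hb⟩
      by_cases hi : i.val % 2 = 0
      · have := (hconfig₀ i hi).2
        rw [this] at hb; linarith
      · have : t₀ i = 1 := by simp [ht₀, hi]
        rw [this] at ha; linarith
  have hink₀ : ink t₀ = 10 * p := by
    rw [hink]; exact aux_ink_config hp t₀ 4 1 (by norm_num) hconfig₀
  refine ⟨⟨⟨t₀, hvalid₀, hink₀.symm⟩, ?_⟩, ?_⟩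
  · rintro I ⟨t, ht, rfl⟩; exact ink_le t ht
  · intro t ht
    obtain ⟨hb, hc⟩ := (hvalid t).mp ht
    constructor
    · -- forward direction
      intro heq
      have hsum5 : ∑ i, (t i + t (i + 1)) = ∑ _i : ZMod (2 * p), (5 : ℝ) := by
        rw [← aux_ink, ← hink t, heq, Finset.sum_const, Finset.card_univ, ZMod.card]
        push_cast; ring
      have pair_eq : ∀ i : ZMod (2 * p), t i + t (i + 1) = 5 := by
        have := (Finset.sum_eq_sum_iff_of_le
          (f := fun i : ZMod (2 * p) => t i + t (i + 1))
          (g := fun _ => (5 : ℝ)) (fun i _ => pair_le t ht i)).mp hsum5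
        intro i; exact this i (Finset.mem_univ i)
      have step : ∀ i : ZMod (2 * p), t (i + 1) = 5 - t i := by
        intro i; linarith [pair_eq i]
      have t0cases : t 0 = 1 ∨ t 0 = 4 := by
        rcases le_or_gt (t 0) 1 with h | h
        · left; linarith [(hb (0 + 1)).2, pair_eq 0]
        · right
          have h1 : ¬ (1 < t (0 + 1)) := fun hh => hc 0 ⟨h, hh⟩
          linarith [(hb (0 : ZMod (2 * p))).2, pair_eq 0]
      have claim : ∀ n : ℕ, t ((n : ℕ) : ZMod (2 * p)) =
          if n % 2 = 0 then t 0 else 5 - t 0 := by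
        intro n
        induction n with
        | zero => simp
        | succ n ih =>
          have hcast : ((n + 1 : ℕ) : ZMod (2 * p)) = ((n : ℕ) : ZMod (2 * p)) + 1 := by
            push_cast; ring
          rw [hcast, step, ih]
          by_cases hn : n % 2 = 0
          · rw [if_pos hn, if_neg (by omega)]
          · rw [if_neg hn, if_pos (by omega)]; ring
      have valcast : ∀ i : ZMod (2 * p),
          t i = if i.val % 2 = 0 then t 0 else 5 - t 0 := by
        intro i
        have e : ((i.val : ℕ) : ZMod (2 * p)) = i := ZMod.natCast_rightInverse i
        conv_lhs => rw [← e]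
        exact claim i.val
      rcases t0cases with h0 | h0
      · right
        intro i hi
        have h1 : t i = 1 := by rw [valcast i, if_pos hi, h0]
        refine ⟨h1, ?_⟩
        rw [step i, h1]; norm_num
      · left
        intro i hi
        have h1 : t i = 4 := by rw [valcast i, if_pos hi, h0]
        refine ⟨h1, ?_⟩
        rw [step i, h1]; norm_num
    · -- reverse direction
      rintro (h | h)
      · rw [hink]; exact aux_ink_config hp t 4 1 (by norm_num) h
      · rw [hink]; exact aux_ink_config hp t 1 4 (by norm_num) h
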